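/- arXiv:2307.04708 — 3 statements merged into one kernel-verified Lean document; each statement's English description precedes it below -/
import Mathlib

section
/- Let t ∈ ℝ and let u be a real number with 0 < u < 1/2. Then both integrals ∫₀^∞ e^{−ux} K₀(x,t) dx and ∫₀^∞ e^{ux} K₀(x,t) dx converge, and ∫₀^∞ e^{−ux} K₀(x,t) dx − ∫₀^∞ e^{ux} K₀(x,t) dx = −4π·cosh(tu)/sin(2πu) + 2/u. -/
open Real MeasureTheory Set

/-- Mirzakhani's recursion kernel. -/
noncomputable def K0 (x t : ℝ) : ℝ :=
  1 / (1 + Real.exp ((x + t) / 2)) + 1 / (1 + Real.exp ((x - t) / 2))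


noncomputable def phi (s w : ℝ) : ℝ := Real.exp (s * w) / (1 + Real.exp w)
lemma one_add_exp_pos (w : ℝ) : 0 < 1 + Real.exp w := by positivity
lemma one_add_exp_ne (w : ℝ) : 1 + Real.exp w ≠ 0 := (one_add_exp_pos w).ne'

noncomputable def lgt (x : ℝ) : ℝ := Real.log x - Real.log (1 - x)

lemma lgt_exp {x : ℝ} (hx : 0 < x) (hx1 : x < 1) :
    Real.exp (lgt x) = x / (1 - x) := by
  rw [lgt, Real.exp_sub, Real.exp_log hx, Real.exp_log (by linarith)]

lemma lgt_image : lgt '' (Ioo 0 1) = univ := by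
  ext w
  simp only [mem_image, mem_univ, iff_true]
  refine ⟨Real.exp w / (1 + Real.exp w), ⟨by positivity, ?_⟩, ?_⟩
  · rw [div_lt_one (one_add_exp_pos w)]; linarith
  · have h1 : (1:ℝ) - Real.exp w / (1 + Real.exp w) = 1 / (1 + Real.exp w) := by
      field_simp
      ring
    rw [lgt, h1, Real.log_div (Real.exp_ne_zero w) (one_add_exp_ne w),
      Real.log_exp, one_div, Real.log_inv]
    ring

lemma lgt_inj : InjOn lgt (Ioo 0 1) := by
  intro a ha b hb hab
  have h := congrArg Real.exp hab
  rw [lgt_exp ha.1 ha.2, lgt_exp hb.1 hb.2] at h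
  have ha1 : (0:ℝ) < 1 - a := by linarith [ha.2]
  have hb1 : (0:ℝ) < 1 - b := by linarith [hb.2]
  field_simp at h
  nlinarith

lemma lgt_deriv {x : ℝ} (hx : x ∈ Ioo (0:ℝ) 1) :
    HasDerivWithinAt lgt (1 / (x * (1 - x))) (Ioo 0 1) x := by
  have hx1 : (0:ℝ) < 1 - x := by linarith [hx.2]
  have h1 : HasDerivAt (fun y : ℝ => Real.log (1 - y)) (-(1 - x)⁻¹) x := by
    have := (Real.hasDerivAt_log hx1.ne').comp x ((hasDerivAt_id x).const_sub 1)
    exact this.congr_deriv (by ring)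
  have h2 : HasDerivAt lgt (x⁻¹ + (1 - x)⁻¹) x := by
    have := (Real.hasDerivAt_log hx.1.ne').sub h1
    exact this.congr_deriv (by ring)
  have heq : x⁻¹ + (1 - x)⁻¹ = 1 / (x * (1 - x)) := by
    have h0 : x ≠ 0 := hx.1.ne'
    have h1' : (1:ℝ) - x ≠ 0 := hx1.ne'
    field_simp
    ring
  rw [← heq]
  exact h2.hasDerivWithinAt

lemma cov_pointwise {σ x : ℝ} (hx : 0 < x) (hx1 : x < 1) :
    |1 / (x * (1 - x))| • phi σ (lgt x) = x ^ (σ - 1) * (1 - x) ^ (-σ) := by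
  have h1x : (0:ℝ) < 1 - x := by linarith
  have heσ : Real.exp (σ * lgt x) = x ^ σ * (1 - x) ^ (-σ) := by
    rw [Real.rpow_def_of_pos hx, Real.rpow_def_of_pos h1x, ← Real.exp_add, lgt]
    congr 1; ring
  have hden : (1:ℝ) + Real.exp (lgt x) = 1 / (1 - x) := by
    rw [lgt_exp hx hx1]; field_simp; ring
  rw [phi, heσ, hden, abs_of_pos (by positivity), smul_eq_mul,
    Real.rpow_sub_one hx.ne']
  field_simp

lemma beta_complex_eq {s : ℝ} (h0 : 0 < s) (h1 : s < 1) :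
    Complex.betaIntegral s (1 - s) = ((π / Real.sin (π * s) : ℝ) : ℂ) := by
  have hs : 0 < Complex.re (s : ℂ) := by simpa using h0
  have ht : 0 < Complex.re (1 - (s : ℂ)) := by simpa using sub_pos.mpr h1
  have h := Complex.Gamma_mul_Gamma_eq_betaIntegral hs ht
  rw [add_sub_cancel, Complex.Gamma_one, one_mul] at h
  rw [← h, Complex.Gamma_mul_Gamma_one_sub]
  rw [Complex.ofReal_div, Complex.ofReal_sin, Complex.ofReal_mul]

lemma beta_integrand_eq {s : ℝ} (x : ℝ) (hx : 0 ≤ x) (hx1 : x ≤ 1) :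
    (x : ℂ) ^ ((s : ℂ) - 1) * ((1 : ℂ) - x) ^ ((1 - (s : ℂ)) - 1)
      = ((x ^ (s - 1) * (1 - x) ^ (-s) : ℝ) : ℂ) := by
  rw [Complex.ofReal_mul, Complex.ofReal_cpow hx, Complex.ofReal_cpow (by linarith)]
  push_cast
  ring_nf

lemma beta_real_value {s : ℝ} (h0 : 0 < s) (h1 : s < 1) :
    ∫ x in Ioo (0:ℝ) 1, x ^ (s - 1) * (1 - x) ^ (-s) = π / Real.sin (π * s) := by
  have key : Complex.betaIntegral s (1 - s)
      = ((∫ x in (0:ℝ)..1, x ^ (s - 1) * (1 - x) ^ (-s) : ℝ) : ℂ) := by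
    rw [Complex.betaIntegral, ← intervalIntegral.integral_ofReal]
    apply intervalIntegral.integral_congr
    intro x hx
    rw [uIcc_of_le (by norm_num : (0:ℝ) ≤ 1)] at hx
    exact beta_integrand_eq x hx.1 hx.2
  rw [beta_complex_eq h0 h1] at key
  have := Complex.ofReal_inj.mp key.symm
  rw [intervalIntegral.integral_of_le (by norm_num : (0:ℝ) ≤ 1),
    integral_Ioc_eq_integral_Ioo] at this
  exact this

lemma beta_real_integrable {s : ℝ} (h0 : 0 < s) (h1 : s < 1) :
    IntegrableOn (fun x : ℝ => x ^ (s - 1) * (1 - x) ^ (-s)) (Ioo 0 1) := by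
  have hs : 0 < Complex.re (s : ℂ) := by simpa using h0
  have ht : 0 < Complex.re (1 - (s : ℂ)) := by simpa using sub_pos.mpr h1
  have h := (Complex.betaIntegral_convergent hs ht)
  have h2 : IntegrableOn
      (fun x : ℝ => (x : ℂ) ^ ((s : ℂ) - 1) * ((1 : ℂ) - x) ^ ((1 - (s : ℂ)) - 1))
      (Ioo 0 1) := by
    refine ((intervalIntegrable_iff_integrableOn_Ioc_of_le (by norm_num)).mp h).mono_set
      Ioo_subset_Ioc_self
  have h3 := h2.re
  refine (IntegrableOn.congr_fun h3 ?_ measurableSet_Ioo)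
  intro x hx
  simp only
  rw [beta_integrand_eq x hx.1.le hx.2.le]
  exact Complex.ofReal_re _

lemma key_integrable {σ : ℝ} (h0 : 0 < σ) (h1 : σ < 1) : Integrable (phi σ) := by
  rw [← integrableOn_univ, ← lgt_image,
    integrableOn_image_iff_integrableOn_abs_deriv_smul measurableSet_Ioo
      (fun x hx => lgt_deriv hx) lgt_inj]
  refine (beta_real_integrable h0 h1).congr_fun ?_ measurableSet_Ioo
  intro x hx
  exact (cov_pointwise hx.1 hx.2).symm

lemma key_value {σ : ℝ} (h0 : 0 < σ) (h1 : σ < 1) :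
    ∫ w, phi σ w = π / Real.sin (π * σ) := by
  have h := integral_image_eq_integral_abs_deriv_smul measurableSet_Ioo
    (fun x (hx : x ∈ Ioo (0:ℝ) 1) => lgt_deriv hx) lgt_inj (phi σ)
  rw [lgt_image, setIntegral_univ] at h
  rw [h, ← beta_real_value h0 h1]
  refine setIntegral_congr_fun measurableSet_Ioo ?_
  intro x hx
  exact cov_pointwise hx.1 hx.2

-- phi basic facts
lemma phi_le (s w : ℝ) : phi s w ≤ Real.exp (-(1 - s) * w) := by
  have h : Real.exp (-(1 - s) * w) * Real.exp w = Real.exp (s * w) := by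
    rw [← Real.exp_add]; ring_nf
  rw [phi, div_le_iff₀ (one_add_exp_pos w)]
  nlinarith [Real.exp_pos (-(1 - s) * w), Real.exp_pos w]

lemma phi_cont (s : ℝ) : Continuous (phi s) :=
  (Real.continuous_exp.comp (continuous_const.mul continuous_id)).div
    (continuous_const.add Real.continuous_exp) one_add_exp_ne

lemma phi_nonneg (s w : ℝ) : 0 ≤ phi s w :=
  div_nonneg (Real.exp_nonneg _) (one_add_exp_pos w).le

lemma phi_integrableOn_Ioi {s : ℝ} (hs : s < 1) (c : ℝ) :
    IntegrableOn (phi s) (Ioi c) := by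
  have h := exp_neg_integrableOn_Ioi c (sub_pos.mpr hs)
  refine h.mono' ((phi_cont s).aestronglyMeasurable.restrict) ?_
  filter_upwards with w
  rw [Real.norm_eq_abs, abs_of_nonneg (phi_nonneg s w)]
  simpa [neg_mul] using phi_le s w

lemma phi_neg (s w : ℝ) : phi s (-w) = phi (1 - s) w := by
  unfold phi
  rw [div_eq_div_iff (one_add_exp_ne _) (one_add_exp_ne _)]
  have h1 : Real.exp (s * -w) * Real.exp w = Real.exp ((1 - s) * w) := by
    rw [← Real.exp_add]; ring_nf
  have h2 : Real.exp ((1 - s) * w) * Real.exp (-w) = Real.exp (s * -w) := by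
    rw [← Real.exp_add]; ring_nf
  have e1 : Real.exp (s * -w) * (1 + Real.exp w)
      = Real.exp (s * -w) + Real.exp ((1 - s) * w) := by rw [mul_add, mul_one, h1]
  have e2 : Real.exp ((1 - s) * w) * (1 + Real.exp (-w))
      = Real.exp ((1 - s) * w) + Real.exp (s * -w) := by rw [mul_add, mul_one, h2]
  rw [e1, e2]; ring

lemma phi_one_sub (s v : ℝ) : phi (1 - s) v = Real.exp (-s * v) - phi (-s) v := by
  unfold phi
  rw [eq_sub_iff_add_eq, ← add_div, div_eq_iff (one_add_exp_ne v), mul_add, mul_one,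
    ← Real.exp_add, show (1 - s) * v = -s * v + v by ring]
  ring

lemma phi_add_exp (s v : ℝ) : phi (-s) v + phi (1 - s) v = Real.exp (-s * v) := by
  rw [phi_one_sub]; ring

lemma phi_intervalIntegrable (s a b : ℝ) : IntervalIntegrable (phi s) volume a b :=
  (phi_cont s).intervalIntegrable a b

lemma split_Ioi {s : ℝ} (hs : s < 1) (c : ℝ) :
    ∫ w in Ioi c, phi s w = (∫ w in Ioi (0:ℝ), phi s w) - ∫ w in (0:ℝ)..c, phi s w := by
  rcases le_total (0:ℝ) c with h | h
  · have hu : Ioc (0:ℝ) c ∪ Ioi c = Ioi 0 := Ioc_union_Ioi_eq_Ioi h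
    have hadd := setIntegral_union (Ioc_disjoint_Ioi (le_refl c)) measurableSet_Ioi
      ((phi_integrableOn_Ioi hs 0).mono_set Ioc_subset_Ioi_self)
      (phi_integrableOn_Ioi hs c) (f := phi s)
    rw [hu] at hadd
    rw [intervalIntegral.integral_of_le h, hadd]
    ring
  · have hu : Ioc c (0:ℝ) ∪ Ioi 0 = Ioi c := Ioc_union_Ioi_eq_Ioi h
    have hadd := setIntegral_union (Ioc_disjoint_Ioi (le_refl (0:ℝ))) measurableSet_Ioi
      ((phi_integrableOn_Ioi hs c).mono_set Ioc_subset_Ioi_self)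
      (phi_integrableOn_Ioi hs 0) (f := phi s)
    rw [hu] at hadd
    rw [intervalIntegral.integral_symm, intervalIntegral.integral_of_le h, hadd]
    ring

lemma key2 {σ : ℝ} (h0 : 0 < σ) (h1 : σ < 1) :
    (∫ w in Ioi (0:ℝ), phi (1 - σ) w) + (∫ w in Ioi (0:ℝ), phi σ w)
      = π / Real.sin (π * σ) := by
  have hint := key_integrable h0 h1
  have hsplit := intervalIntegral.integral_Iic_add_Ioi (b := (0:ℝ)) hint.integrableOn hint.integrableOn
  have hIic : ∫ x in Iic (0:ℝ), phi σ x = ∫ x in Ioi (0:ℝ), phi (1 - σ) x := by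
    have := integral_comp_neg_Ioi (0:ℝ) (phi σ)
    rw [neg_zero] at this
    rw [← this]
    simp_rw [phi_neg]
  rw [hIic] at hsplit
  rw [hsplit, key_value h0 h1]

lemma exp_integral_Ioi {b : ℝ} (hb : 0 < b) :
    ∫ x in Ioi (0:ℝ), Real.exp (-(b * x)) = 1 / b := by
  have := integral_comp_mul_left_Ioi (fun y => Real.exp (-y)) 0 hb
  rw [mul_zero] at this
  rw [this, integral_exp_neg_Ioi_zero, smul_eq_mul, mul_one, one_div]


-- affine change of variables onto the half-line
lemma aff_image (a : ℝ) : (fun w : ℝ => 2 * w - a) '' Ioi (a / 2) = Ioi 0 := by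
  ext x
  simp only [mem_image, mem_Ioi]
  constructor
  · rintro ⟨w, hw, rfl⟩; linarith
  · intro hx; exact ⟨(x + a) / 2, by linarith, by ring⟩

lemma aff_deriv (a : ℝ) (w : ℝ) :
    HasDerivWithinAt (fun w : ℝ => 2 * w - a) 2 (Ioi (a / 2)) w := by
  have : HasDerivAt (fun w : ℝ => 2 * w - a) 2 w := by
    simpa using ((hasDerivAt_id w).const_mul 2).sub_const a
  exact this.hasDerivWithinAt

lemma aff_inj (a : ℝ) : InjOn (fun w : ℝ => 2 * w - a) (Ioi (a / 2)) := by
  intro x hx y hy h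
  simp only at h
  linarith

lemma aff_pointwise (k a w : ℝ) :
    |(2:ℝ)| • (Real.exp (k * (2 * w - a)) * (1 / (1 + Real.exp (((2 * w - a) + a) / 2))))
      = 2 * Real.exp (-(k * a)) * phi (2 * k) w := by
  have h2 : ((2 * w - a) + a) / 2 = w := by ring
  rw [h2, phi, smul_eq_mul, abs_of_pos (by norm_num : (0:ℝ) < 2),
    show k * (2 * w - a) = -(k * a) + 2 * k * w by ring, Real.exp_add]
  ring

lemma cov_half_val (k a : ℝ) :
    (∫ x in Ioi (0:ℝ), Real.exp (k * x) * (1 / (1 + Real.exp ((x + a) / 2))))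
      = 2 * Real.exp (-(k * a)) * ∫ w in Ioi (a / 2), phi (2 * k) w := by
  have h := integral_image_eq_integral_abs_deriv_smul measurableSet_Ioi
    (fun w _ => aff_deriv a w) (aff_inj a)
    (fun x => Real.exp (k * x) * (1 / (1 + Real.exp ((x + a) / 2))))
  rw [aff_image] at h
  rw [h, ← integral_const_mul]
  congr 1
  funext w
  exact aff_pointwise k a w

lemma cov_half_int {k : ℝ} (hk : 2 * k < 1) (a : ℝ) :
    IntegrableOn (fun x => Real.exp (k * x) * (1 / (1 + Real.exp ((x + a) / 2)))) (Ioi 0) := by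
  rw [← aff_image a, integrableOn_image_iff_integrableOn_abs_deriv_smul measurableSet_Ioi
    (fun w _ => aff_deriv a w) (aff_inj a)]
  have : (fun w => |(2:ℝ)| • (Real.exp (k * (2 * w - a)) *
      (1 / (1 + Real.exp (((2 * w - a) + a) / 2)))))
      = fun w => 2 * Real.exp (-(k * a)) * phi (2 * k) w := by
    funext w; exact aff_pointwise k a w
  rw [this]
  exact (phi_integrableOn_Ioi hk (a / 2)).const_mul _

-- elementary interval integrals
lemma integral_exp_mul {k : ℝ} (hk : k ≠ 0) (c : ℝ) :
    ∫ v in (0:ℝ)..c, Real.exp (k * v) = (Real.exp (k * c) - 1) / k := by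
  have hd : ∀ x ∈ uIcc (0:ℝ) c,
      HasDerivAt (fun v => Real.exp (k * v) / k) (Real.exp (k * x)) x := by
    intro x _
    have h1 : HasDerivAt (fun v : ℝ => k * v) k x := by
      simpa using (hasDerivAt_id x).const_mul k
    have := ((Real.hasDerivAt_exp (k * x)).comp x h1).div_const k
    simpa [mul_div_cancel_right₀ _ hk] using this
  have hi : IntervalIntegrable (fun v => Real.exp (k * v)) volume 0 c :=
    (Real.continuous_exp.comp (continuous_const.mul continuous_id)).intervalIntegrable 0 c
  rw [intervalIntegral.integral_eq_sub_of_hasDerivAt hd hi]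
  simp [sub_div]

lemma interval_reflect (s c : ℝ) :
    ∫ w in (0:ℝ)..(-c), phi s w = -∫ v in (0:ℝ)..c, phi (1 - s) v := by
  have h := intervalIntegral.integral_comp_neg (a := (0:ℝ)) (b := c) (phi s)
  simp_rw [phi_neg] at h
  rw [h, neg_zero, intervalIntegral.integral_symm]

theorem stmt0 (t u : ℝ) (hu0 : 0 < u) (hu1 : u < 1 / 2) :
    IntegrableOn (fun x => Real.exp (-u * x) * K0 x t) (Set.Ioi 0) ∧
    IntegrableOn (fun x => Real.exp (u * x) * K0 x t) (Set.Ioi 0) ∧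
    (∫ x in Set.Ioi (0:ℝ), Real.exp (-u * x) * K0 x t) -
      (∫ x in Set.Ioi (0:ℝ), Real.exp (u * x) * K0 x t) =
      -4 * π * Real.cosh (t * u) / Real.sin (2 * π * u) + 2 / u := by
  have hu2 : (0:ℝ) < 2 * u := by linarith
  have hu21 : 2 * u < 1 := by linarith
  have hm2u : -(2 * u) < 1 := by linarith
  have hne : (2:ℝ) * u ≠ 0 := hu2.ne'
  have harg : (2:ℝ) * -u = -(2 * u) := by ring
  have hKsplit : ∀ k : ℝ, (fun x => Real.exp (k * x) * K0 x t)
      = (fun x => Real.exp (k * x) * (1 / (1 + Real.exp ((x + t) / 2))))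
        + fun x => Real.exp (k * x) * (1 / (1 + Real.exp ((x + -t) / 2))) := by
    intro k; funext x
    simp only [Pi.add_apply, K0, sub_eq_add_neg]
    ring
  have hint1 : IntegrableOn (fun x => Real.exp (-u * x) * K0 x t) (Set.Ioi 0) := by
    rw [hKsplit (-u)]
    exact (cov_half_int (by linarith) t).add (cov_half_int (by linarith) (-t))
  have hint2 : IntegrableOn (fun x => Real.exp (u * x) * K0 x t) (Set.Ioi 0) := by
    rw [hKsplit u]
    exact (cov_half_int (by linarith) t).add (cov_half_int (by linarith) (-t))
  refine ⟨hint1, hint2, ?_⟩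
  have hadd1 : ∫ x in Set.Ioi (0:ℝ), Real.exp (-u * x) * K0 x t
      = (∫ x in Set.Ioi (0:ℝ), Real.exp (-u * x) * (1 / (1 + Real.exp ((x + t) / 2))))
        + ∫ x in Set.Ioi (0:ℝ), Real.exp (-u * x) * (1 / (1 + Real.exp ((x + -t) / 2))) := by
    rw [hKsplit (-u)]
    exact integral_add' (cov_half_int (by linarith) t) (cov_half_int (by linarith) (-t))
  have hadd2 : ∫ x in Set.Ioi (0:ℝ), Real.exp (u * x) * K0 x t
      = (∫ x in Set.Ioi (0:ℝ), Real.exp (u * x) * (1 / (1 + Real.exp ((x + t) / 2))))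
        + ∫ x in Set.Ioi (0:ℝ), Real.exp (u * x) * (1 / (1 + Real.exp ((x + -t) / 2))) := by
    rw [hKsplit u]
    exact integral_add' (cov_half_int (by linarith) t) (cov_half_int (by linarith) (-t))
  -- interval integrability of exponentials
  have hexpI : ∀ k : ℝ, IntervalIntegrable (fun v => Real.exp (k * v)) volume 0 (t/2) :=
    fun k => (Real.continuous_exp.comp (continuous_const.mul continuous_id)).intervalIntegrable 0 (t/2)
  -- the four half-line integrals
  have hLt := cov_half_val (-u) t
  rw [harg, show -(-u * t) = u * t by ring, split_Ioi hm2u] at hLt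
  have hrefl1 : ∫ v in (0:ℝ)..(t/2), phi (1 - -(2 * u)) v
      = ((Real.exp (u * t) - 1) / (2 * u)) - ∫ v in (0:ℝ)..(t/2), phi (2 * u) v := by
    have hcg : ∀ v ∈ uIcc (0:ℝ) (t/2),
        phi (1 - -(2 * u)) v = Real.exp (2 * u * v) - phi (2 * u) v := by
      intro v _
      have h := phi_one_sub (-(2 * u)) v
      rw [neg_neg] at h
      exact h
    rw [intervalIntegral.integral_congr hcg,
      intervalIntegral.integral_sub (hexpI (2 * u)) (phi_intervalIntegrable _ _ _),
      integral_exp_mul hne, show 2 * u * (t / 2) = u * t by ring]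
  have hLmt := cov_half_val (-u) (-t)
  rw [harg, show -(-u * -t) = -(u * t) by ring, split_Ioi hm2u,
    show (-t) / 2 = -(t / 2) by ring, interval_reflect, hrefl1] at hLmt
  have hMt := cov_half_val u t
  rw [split_Ioi hu21] at hMt
  have hrefl2 : ∫ v in (0:ℝ)..(t/2), phi (1 - 2 * u) v
      = ((Real.exp (-(u * t)) - 1) / (-(2 * u))) - ∫ v in (0:ℝ)..(t/2), phi (-(2 * u)) v := by
    have hcg : ∀ v ∈ uIcc (0:ℝ) (t/2),
        phi (1 - 2 * u) v = Real.exp (-(2 * u) * v) - phi (-(2 * u)) v :=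
      fun v _ => phi_one_sub (2 * u) v
    rw [intervalIntegral.integral_congr hcg,
      intervalIntegral.integral_sub (hexpI (-(2 * u))) (phi_intervalIntegrable _ _ _),
      integral_exp_mul (neg_ne_zero.mpr hne), show -(2 * u) * (t / 2) = -(u * t) by ring]
  have hMmt := cov_half_val u (-t)
  rw [show -(u * -t) = u * t by ring, split_Ioi hu21,
    show (-t) / 2 = -(t / 2) by ring, interval_reflect, hrefl2] at hMmt
  -- key relations
  have hAQ : (∫ w in Ioi (0:ℝ), phi (-(2 * u)) w) + (∫ w in Ioi (0:ℝ), phi (1 - 2 * u) w)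
      = 1 / (2 * u) := by
    rw [← integral_add (phi_integrableOn_Ioi hm2u 0) (phi_integrableOn_Ioi (by linarith) 0)]
    have hpt : ∀ w : ℝ, phi (-(2 * u)) w + phi (1 - 2 * u) w = Real.exp (-(2 * u * w)) := by
      intro w
      rw [phi_add_exp]
      ring_nf
    simp_rw [hpt]
    exact exp_integral_Ioi hu2
  have hkey := key2 (σ := 2 * u) hu2 hu21
  have hS : Real.sin (π * (2 * u)) ≠ 0 := by
    have h1 : 0 < π * (2 * u) := by positivity
    have h2 : π * (2 * u) < π := by nlinarith [pi_pos]
    exact (Real.sin_pos_of_pos_of_lt_pi h1 h2).ne'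
  -- assemble
  rw [hadd1, hadd2, hLt, hLmt, hMt, hMmt, Real.cosh_eq,
    show t * u = u * t by ring, show 2 * π * u = π * (2 * u) by ring]
  have hA : (∫ w in Ioi (0:ℝ), phi (-(2 * u)) w)
      = 1 / (2 * u) - ∫ w in Ioi (0:ℝ), phi (1 - 2 * u) w := by linarith
  rw [hA, Real.exp_neg]
  set S := Real.sin (π * (2 * u)) with hSdef
  rw [eq_div_iff hS] at hkey
  rw [← hkey]
  have hX := Real.exp_ne_zero (u * t)
  field_simp
  ring
end

section
/- For every integer i ≥ 1 and every t ∈ ℝ, ∫₀^∞ (x^{2i−1}/(2i−1)!) · K₀(x,t) dx = ∑_{m=0}^{i} β_m · t^{2i−2m}/(2i−2m)!. -/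
open Real MeasureTheory

namespace Stmt2Aux

open Finset

lemma sum_range_two_mul {M : Type*} [AddCommMonoid M] (f : ℕ → M)
    (hf : ∀ j, Odd j → f j = 0) : ∀ i, ∑ j ∈ range (2*i), f j = ∑ k ∈ range i, f (2*k) := by
  intro i
  induction i with
  | zero => simp
  | succ n ih =>
      have h2 : 2*(n+1) = (2*n)+1+1 := by ring
      rw [h2, sum_range_succ, sum_range_succ, ih, sum_range_succ,
        hf (2*n+1) ⟨n, by ring⟩, add_zero]

open PowerSeries

private noncomputable def B : ℚ⟦X⟧ := bernoulliPowerSeries ℚ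

private lemma hB : B * (exp ℚ - 1) = X := bernoulliPowerSeries_mul_exp_sub_one ℚ

private lemma hexp2 : exp ℚ ^ 2 = rescale (2:ℚ) (exp ℚ) := by
  have := exp_pow_eq_rescale_exp (A := ℚ) 2
  simpa using this

private lemma hne : (exp ℚ - 1) ≠ 0 := by
  intro h
  have := congrArg (coeff 1) h
  simp [coeff_exp] at this

private lemma haux : rescale (2:ℚ) B * (exp ℚ ^ 2 - 1) = C (2:ℚ) * X := by
  calc rescale (2:ℚ) B * (exp ℚ ^ 2 - 1) = rescale (2:ℚ) B * (rescale (2:ℚ) (exp ℚ) - 1) := by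
        rw [hexp2]
    _ = rescale (2:ℚ) (B * (exp ℚ - 1)) := by rw [map_mul, map_sub, map_one]
    _ = rescale (2:ℚ) X := by rw [hB]
    _ = C (2:ℚ) * X := rescale_X 2

private lemma h1 : rescale (2:ℚ) B * (exp ℚ + 1) = C (2:ℚ) * B := by
  apply mul_right_cancel₀ hne
  calc rescale (2:ℚ) B * (exp ℚ + 1) * (exp ℚ - 1)
      = rescale (2:ℚ) B * (exp ℚ ^ 2 - 1) := by ring
    _ = C (2:ℚ) * X := haux
    _ = C (2:ℚ) * (B * (exp ℚ - 1)) := by rw [hB]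
    _ = C (2:ℚ) * B * (exp ℚ - 1) := by ring

private lemma key : (rescale (2:ℚ) B - C (2:ℚ) * B) * (exp ℚ - evalNegHom (exp ℚ)) = -(C (2:ℚ) * X) := by
  have h2 : rescale (2:ℚ) B - C (2:ℚ) * B = -(rescale (2:ℚ) B * exp ℚ) := by
    rw [← h1]; ring
  rw [h2]
  calc -(rescale (2:ℚ) B * exp ℚ) * (exp ℚ - evalNegHom (exp ℚ))
      = -(rescale (2:ℚ) B * (exp ℚ ^ 2 - exp ℚ * evalNegHom (exp ℚ))) := by ring
    _ = -(rescale (2:ℚ) B * (exp ℚ ^ 2 - 1)) := by rw [exp_mul_exp_neg_eq_one]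
    _ = -(C (2:ℚ) * X) := by rw [haux]

private lemma coeffH (a : ℕ) :
    (coeff a) (rescale (2:ℚ) B - C (2:ℚ) * B) = ((2:ℚ)^a - 2) * bernoulli a / (Nat.factorial a : ℚ) := by
  rw [map_sub, coeff_rescale, coeff_C_mul]
  simp only [B, bernoulliPowerSeries, coeff_mk, Algebra.algebraMap_self, RingHom.id_apply]
  ring

private lemma coeffH_odd {a : ℕ} (ha : Odd a) :
    (coeff a) (rescale (2:ℚ) B - C (2:ℚ) * B) = 0 := by
  rw [coeffH]
  rcases eq_or_ne a 1 with h | h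
  · subst h; norm_num
  · have h1a : 1 < a := by
      rcases ha with ⟨k, hk⟩; omega
    have : bernoulli a = 0 := by
      rw [bernoulli_eq_bernoulli'_of_ne_one h, bernoulli'_eq_zero_of_odd ha h1a]
    rw [this]; ring

private lemma coeffT_odd {b : ℕ} (hb : Odd b) :
    (coeff b) (exp ℚ - evalNegHom (exp ℚ)) = 2 / (Nat.factorial b : ℚ) := by
  have : evalNegHom (exp ℚ) = rescale (-1 : ℚ) (exp ℚ) := rfl
  rw [map_sub, this, coeff_rescale, coeff_exp, hb.neg_one_pow]
  simp only [Algebra.algebraMap_self, RingHom.id_apply]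
  ring

lemma bern_id {p : ℕ} (hp : 1 ≤ p) :
    ∑ q ∈ range (p+1),
      ((2:ℚ)^(2*q) - 2) * bernoulli (2*q) / ((Nat.factorial (2*q) : ℚ) * (Nat.factorial (2*(p-q)+1) : ℚ)) = 0 := by
  have h := congrArg (coeff (2*p+1)) key
  rw [PowerSeries.coeff_mul, Finset.Nat.sum_antidiagonal_eq_sum_range_succ_mk] at h
  have hrhs : (coeff (2*p+1)) (-(C (2:ℚ) * X)) = 0 := by
    rw [map_neg, coeff_C_mul, coeff_X, if_neg (by omega)]
    simp
  rw [hrhs] at h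
  have hodd : ∀ j, Odd j → (coeff j) (rescale (2:ℚ) B - C (2:ℚ) * B) *
      (coeff (2*p+1 - j)) (exp ℚ - evalNegHom (exp ℚ)) = 0 := by
    intro j hj
    rw [coeffH_odd hj, zero_mul]
  have hrange : (2*p+1+1) = 2*(p+1) := by ring
  simp only [Nat.succ_eq_add_one] at h
  rw [hrange, sum_range_two_mul _ hodd] at h
  have hterm : ∀ q ∈ range (p+1),
      (coeff (2*q)) (rescale (2:ℚ) B - C (2:ℚ) * B) *
        (coeff (2*p+1 - 2*q)) (exp ℚ - evalNegHom (exp ℚ)) =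
      2 * (((2:ℚ)^(2*q) - 2) * bernoulli (2*q) / ((Nat.factorial (2*q) : ℚ) * (Nat.factorial (2*(p-q)+1) : ℚ))) := by
    intro q hq
    have hq' : q ≤ p := by simpa [Nat.lt_succ_iff] using hq
    have hsub : 2*p+1 - 2*q = 2*(p-q)+1 := by omega
    rw [coeffH, hsub, coeffT_odd ⟨p-q, by ring⟩]
    have h2 : ((Nat.factorial (2*(p-q)+1) : ℚ)) ≠ 0 := by
      exact Nat.cast_ne_zero.mpr (Nat.factorial_ne_zero _)
    have h3 : ((Nat.factorial (2*q) : ℚ)) ≠ 0 := by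
      exact Nat.cast_ne_zero.mpr (Nat.factorial_ne_zero _)
    field_simp
  rw [Finset.sum_congr rfl hterm, ← Finset.mul_sum] at h
  have := (mul_eq_zero.mp h).resolve_left (by norm_num)
  exact this


noncomputable def Zc (m : ℕ) : ℝ :=
  (-1 : ℝ) ^ (m + 1) * (2:ℝ) ^ (2 * m - 1) * π ^ (2 * m) * (bernoulli (2 * m) : ℝ)
    / (Nat.factorial (2 * m) : ℝ)

noncomputable def J : ℕ → ℝ := fun m => if m = 0 then 1 else ((2:ℝ) ^ (2 * m + 1) - 4) * Zc m

lemma J_zero : J 0 = 1 := by simp [J]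

lemma fact_ne (n : ℕ) : (Nat.factorial n : ℝ) ≠ 0 := Nat.cast_ne_zero.mpr (Nat.factorial_ne_zero n)

lemma cst_eq (m : ℕ) :
    (-2 * π ^ 2) ^ m / ((Nat.factorial m : ℝ) * (Nat.doubleFactorial (2 * m + 1) : ℝ)) =
      (-1 : ℝ) ^ m * 4 ^ m * π ^ (2 * m) / (Nat.factorial (2 * m + 1) : ℝ) := by
  have hfn : (2*m+1).factorial = (2*m+1).doubleFactorial * (2 ^ m * m.factorial) := by
    have h1 := Nat.factorial_eq_mul_doubleFactorial (2*m)
    rwa [Nat.doubleFactorial_two_mul] at h1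
  have hfact : (Nat.factorial (2*m+1) : ℝ)
      = (Nat.doubleFactorial (2*m+1) : ℝ) * (2 ^ m * (Nat.factorial m : ℝ)) := by
    exact_mod_cast congrArg (Nat.cast : ℕ → ℝ) hfn
  have hpow : (-2 * π ^ 2) ^ m = (-1 : ℝ) ^ m * 2 ^ m * π ^ (2 * m) := by
    rw [show (-2 * π ^ 2 : ℝ) = (-1) * 2 * π ^ 2 by ring, mul_pow, mul_pow, ← pow_mul]
  have hdf : (Nat.doubleFactorial (2*m+1) : ℝ) ≠ 0 := by
    exact_mod_cast (Nat.doubleFactorial_pos _).ne'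
  have h4 : (4:ℝ) ^ m = 2 ^ m * 2 ^ m := by rw [← mul_pow]; norm_num
  rw [hpow, hfact, h4]
  field_simp

lemma J_recursion {p : ℕ} (hp : 1 ≤ p) :
    ∑ m ∈ Finset.range (p + 1),
      ((-2 * π ^ 2) ^ m /
          ((Nat.factorial m : ℝ) * (Nat.doubleFactorial (2 * m + 1) : ℝ))) * J (p - m) = 0 := by
  have hQ' : ∑ q ∈ range (p+1),
      (((2:ℝ)^(2*q) - 2) * (bernoulli (2*q) : ℝ) /
        ((Nat.factorial (2*q) : ℝ) * (Nat.factorial (2*(p-q)+1) : ℝ))) = 0 := by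
    exact_mod_cast congrArg (fun x : ℚ => (x : ℝ)) (bern_id hp)
  rw [← Finset.sum_range_reflect]
  have hterm : ∀ q ∈ range (p+1),
      ((-2 * π ^ 2) ^ (p + 1 - 1 - q) /
          ((Nat.factorial (p + 1 - 1 - q) : ℝ) *
            (Nat.doubleFactorial (2 * (p + 1 - 1 - q) + 1) : ℝ))) * J (p - (p + 1 - 1 - q)) =
      ((-1:ℝ)^(p+1) * π^(2*p) * 4^p) *
        (((2:ℝ)^(2*q) - 2) * (bernoulli (2*q) : ℝ) /
          ((Nat.factorial (2*q) : ℝ) * (Nat.factorial (2*(p-q)+1) : ℝ))) := by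
    intro q hq
    have hq' : q ≤ p := by simpa [Nat.lt_succ_iff] using hq
    obtain ⟨a, rfl⟩ : ∃ a, p = a + q := ⟨p - q, by omega⟩
    have e1 : a + q + 1 - 1 - q = a := by omega
    have e2 : a + q - a = q := by omega
    have e3 : a + q - q = a := by omega
    rw [e1, e2, e3, cst_eq]
    rcases Nat.eq_zero_or_pos q with rfl | hqpos
    · rw [J_zero, mul_one]
      have := fact_ne (2*a+1)
      norm_num
      field_simp
      ring
    · obtain ⟨b, rfl⟩ : ∃ b, q = b + 1 := ⟨q - 1, by omega⟩
      simp only [J, Zc, if_neg (Nat.succ_ne_zero b)]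
      have e4 : 2 * (b+1) - 1 = 2*b+1 := by omega
      have e5 : 2 * (b+1) + 1 = 2*b+3 := by omega
      have e6 : 2 * (b+1) = 2*b+2 := by omega
      rw [e4, e5, e6]
      have h1 := fact_ne (2*a+1)
      have h2 := fact_ne (2*b+2)
      have h4 : (4:ℝ)^(a+(b+1)) = 2^(2*a) * 2^(2*b) * 4 := by
        rw [show (4:ℝ) = 2^2 by norm_num, ← pow_mul]; ring
      have h4a : (4:ℝ)^a = 2^(2*a) := by rw [show (4:ℝ) = 2^2 by norm_num, ← pow_mul]
      rw [h4, h4a]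
      field_simp
      ring
  rw [Finset.sum_congr rfl hterm, ← Finset.mul_sum, hQ', mul_zero]


lemma beta_eq_J (β : ℕ → ℝ) (hβ0 : β 0 = 1)
    (hβ : ∀ p : ℕ, 1 ≤ p →
      ∑ m ∈ Finset.range (p + 1),
        ((-2 * π ^ 2) ^ m /
            ((Nat.factorial m : ℝ) * (Nat.doubleFactorial (2 * m + 1) : ℝ))) * β (p - m) = 0) :
    ∀ m, β m = J m := by
  intro m
  induction m using Nat.strong_induction_on with
  | _ m ih =>
    match m with
    | 0 => rw [hβ0, J_zero]
    | (n+1) =>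
      have hp := hβ (n+1) (by omega)
      have hJ := J_recursion (p := n+1) (by omega)
      rw [Finset.sum_range_succ'] at hp hJ
      simp only [Nat.sub_zero, pow_zero, Nat.factorial_zero, Nat.cast_one] at hp hJ
      have hsum : ∀ x ∈ Finset.range (n+1),
          ((-2 * π ^ 2) ^ (x+1) /
              ((Nat.factorial (x+1) : ℝ) * (Nat.doubleFactorial (2 * (x+1) + 1) : ℝ)))
              * β (n + 1 - (x+1)) =
          ((-2 * π ^ 2) ^ (x+1) /
              ((Nat.factorial (x+1) : ℝ) * (Nat.doubleFactorial (2 * (x+1) + 1) : ℝ)))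
              * J (n + 1 - (x+1)) := by
        intro x hx
        rw [ih (n+1-(x+1)) (by omega)]
      rw [Finset.sum_congr rfl hsum] at hp
      have hdf1 : (Nat.doubleFactorial (2*0+1) : ℝ) = 1 := by
        norm_num [Nat.doubleFactorial]
      rw [show (2*0+1) = 1 by norm_num] at hp hJ
      have hdf : (Nat.doubleFactorial 1 : ℝ) = 1 := by norm_num [Nat.doubleFactorial]
      rw [hdf] at hp hJ
      simp only [one_mul, div_one] at hp hJ
      linarith

open MeasureTheory Set Filter Topology

noncomputable def g (u : ℝ) : ℝ := 1 / (1 + Real.exp (u / 2))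

lemma g_denom_pos (u : ℝ) : 0 < 1 + Real.exp (u / 2) := by positivity

lemma g_cont : Continuous g := by
  apply Continuous.div continuous_const
  · exact continuous_const.add ((continuous_id.div_const 2).rexp)
  · exact fun u => (g_denom_pos u).ne'

lemma g_nonneg (u : ℝ) : 0 ≤ g u := le_of_lt (div_pos one_pos (g_denom_pos u))

lemma g_le_exp (u : ℝ) : g u ≤ Real.exp (-(u / 2)) := by
  rw [g, Real.exp_neg]
  rw [one_div, inv_le_inv₀ (g_denom_pos u) (Real.exp_pos _)]
  linarith [Real.exp_pos (u/2)]

lemma g_neg (u : ℝ) : g (-u) = 1 - g u := by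
  have h1 := (Real.exp_pos (u/2)).ne'
  have h2 := (g_denom_pos u).ne'
  rw [g, g, show -u/2 = -(u/2) by ring, Real.exp_neg]
  field_simp
  ring

lemma extend {f : ℝ → ℝ} (hf : Continuous f) (hi : IntegrableOn f (Ioi 0)) (a : ℝ) :
    IntegrableOn f (Ioi a) := by
  rcases le_or_gt 0 a with h | h
  · exact hi.mono_set (Ioi_subset_Ioi h)
  · have h2 : IntegrableOn f (Ioc a 0) := hf.integrableOn_Ioc
    have h3 : Ioi a ⊆ Ioc a 0 ∪ Ioi 0 := by
      intro x hx
      rcases le_or_gt x 0 with hx0 | hx0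
      · exact Or.inl ⟨hx, hx0⟩
      · exact Or.inr hx0
    exact (h2.union hi).mono_set h3

lemma master {h : ℝ → ℝ} (hcont : Continuous h) {d : ℝ} (hd : 0 < d)
    (hb : ∀ᶠ u in atTop, |h u| ≤ Real.exp (-(d * u))) (k : ℕ) (c a : ℝ) :
    IntegrableOn (fun u => (u + c) ^ k * h u) (Ioi a) := by
  have hcont' : Continuous fun u => (u + c) ^ k * h u :=
    ((continuous_id.add continuous_const).pow k).mul hcont
  apply extend hcont'
  apply integrable_of_isBigO_exp_neg (b := d / 2) (by linarith) hcont'.continuousOn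
  have h2 : Tendsto (fun u : ℝ => d / 2 * u) atTop atTop :=
    Tendsto.const_mul_atTop (by linarith) tendsto_id
  have h1 : Tendsto (fun u : ℝ => (d / 2 * u) ^ k * Real.exp (-(d / 2 * u))) atTop (𝓝 0) := by
    exact (tendsto_pow_mul_exp_neg_atTop_nhds_zero k).comp h2
  have hev : ∀ᶠ u in atTop, |(d / 2 * u) ^ k * Real.exp (-(d / 2 * u))| < 1 := by
    have := h1.eventually (eventually_abs_sub_lt 0 one_pos)
    simpa using this
  rw [Asymptotics.isBigO_iff]
  refine ⟨(4 / d) ^ k, ?_⟩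
  filter_upwards [hb, hev, eventually_ge_atTop (|c|), eventually_ge_atTop 0]
    with u hbu hevu huc hu0
  have hu : |u + c| ≤ 2 * u := by
    calc |u + c| ≤ |u| + |c| := abs_add_le u c
    _ ≤ u + u := by rw [abs_of_nonneg hu0]; linarith
    _ = 2 * u := by ring
  have habs : ‖(u + c) ^ k * h u‖ ≤ (2 * u) ^ k * Real.exp (-(d * u)) := by
    rw [norm_mul, norm_pow, Real.norm_eq_abs, Real.norm_eq_abs]
    apply mul_le_mul _ hbu (abs_nonneg _) (by positivity)
    exact pow_le_pow_left₀ (abs_nonneg _) hu k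
  have hsplit : (2 * u) ^ k * Real.exp (-(d * u))
      = (4 / d) ^ k * ((d / 2 * u) ^ k * Real.exp (-(d / 2 * u))) * Real.exp (-(d / 2 * u)) := by
    have e1 : (2 * u) ^ k = (4 / d) ^ k * (d / 2 * u) ^ k := by
      rw [← mul_pow]
      congr 1
      field_simp
      ring
    have e2 : Real.exp (-(d * u)) = Real.exp (-(d / 2 * u)) * Real.exp (-(d / 2 * u)) := by
      rw [← Real.exp_add]
      congr 1
      ring
    rw [e1, e2]
    ring
  have hle1 : (d / 2 * u) ^ k * Real.exp (-(d / 2 * u)) ≤ 1 := by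
    have := le_of_lt hevu
    rwa [abs_of_nonneg (by positivity)] at this
  calc ‖(u + c) ^ k * h u‖ ≤ (2 * u) ^ k * Real.exp (-(d * u)) := habs
    _ = (4 / d) ^ k * ((d / 2 * u) ^ k * Real.exp (-(d / 2 * u))) * Real.exp (-(d / 2 * u)) :=
        hsplit
    _ ≤ (4 / d) ^ k * 1 * Real.exp (-(d / 2 * u)) := by
        apply mul_le_mul_of_nonneg_right _ (Real.exp_pos _).le
        apply mul_le_mul_of_nonneg_left hle1 (by positivity)
    _ = (4 / d) ^ k * ‖Real.exp (-(d / 2) * u)‖ := by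
        rw [Real.norm_eq_abs, abs_of_pos (Real.exp_pos _), mul_one]
        ring_nf

lemma int_g_shift (k : ℕ) (c s a : ℝ) :
    IntegrableOn (fun u => (u + c) ^ k * g (u + s)) (Ioi a) := by
  have hcont : Continuous fun u : ℝ => g (u + s) := g_cont.comp (continuous_add_right s)
  apply master hcont (d := 1/4) (by norm_num)
  · filter_upwards [eventually_ge_atTop (-2 * s)] with u hu
    rw [abs_of_nonneg (g_nonneg _)]
    calc g (u + s) ≤ Real.exp (-((u + s) / 2)) := g_le_exp _
      _ ≤ Real.exp (-(1/4 * u)) := by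
          apply Real.exp_le_exp.mpr
          linarith

lemma int_g (k : ℕ) (a : ℝ) : IntegrableOn (fun u => u ^ k * g u) (Ioi a) := by
  have := int_g_shift k 0 0 a
  simpa using this

lemma int_pow_exp (n : ℕ) {c : ℝ} (hc : 0 < c) :
    IntegrableOn (fun u => u ^ n * Real.exp (-(c * u))) (Ioi 0) := by
  have h := master (h := fun u => Real.exp (-(c * u)))
    (continuous_const.mul continuous_id).neg.rexp hc
    (Eventually.of_forall fun u => le_of_eq (abs_of_pos (Real.exp_pos _))) n 0 0
  simpa using h

lemma integral_pow_exp (n : ℕ) {c : ℝ} (hc : 0 < c) :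
    ∫ u in Ioi (0:ℝ), u ^ n * Real.exp (-(c * u)) = (Nat.factorial n : ℝ) / c ^ (n + 1) := by
  have hG : Real.Gamma (n + 1) = ∫ x in Ioi (0:ℝ), Real.exp (-x) * x ^ ((n + 1 : ℝ) - 1) :=
    Real.Gamma_eq_integral (by positivity)
  have h1 : ∫ x in Ioi (0:ℝ), Real.exp (-x) * x ^ ((n + 1 : ℝ) - 1)
      = ∫ x in Ioi (0:ℝ), Real.exp (-x) * x ^ n := by
    apply setIntegral_congr_fun measurableSet_Ioi
    intro x hx
    dsimp only
    rw [show ((n : ℝ) + 1 - 1) = (n : ℝ) by ring, Real.rpow_natCast]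
  have h2 := integral_comp_mul_left_Ioi (fun x => Real.exp (-x) * x ^ n) 0 hc
  rw [mul_zero] at h2
  have h3 : ∀ x : ℝ, Real.exp (-(c * x)) * (c * x) ^ n
      = c ^ n * (x ^ n * Real.exp (-(c * x))) := by
    intro x; rw [mul_pow]; ring
  simp_rw [h3] at h2
  rw [integral_const_mul] at h2
  have h4 : Real.Gamma (n + 1) = (Nat.factorial n : ℝ) := Real.Gamma_nat_eq_factorial n
  rw [← h1, ← hG, h4, smul_eq_mul] at h2
  have hcn : (c : ℝ) ^ n ≠ 0 := by positivity
  field_simp at h2 ⊢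
  rw [pow_succ]
  linarith [h2]

lemma hasSum_g {u : ℝ} (hu : 0 < u) :
    HasSum (fun k : ℕ => (-1 : ℝ) ^ k * Real.exp (-((k + 1 : ℝ) * (u / 2)))) (g u) := by
  have hE := Real.exp_pos (u / 2)
  have hr : ‖-Real.exp (-(u / 2))‖ < 1 := by
    rw [norm_neg, Real.norm_eq_abs, abs_of_pos (Real.exp_pos _)]
    rw [Real.exp_lt_one_iff]
    linarith
  have h := (hasSum_geometric_of_norm_lt_one hr).mul_left (Real.exp (-(u / 2)))
  have hterm : ∀ k : ℕ, Real.exp (-(u / 2)) * (-Real.exp (-(u / 2))) ^ k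
      = (-1 : ℝ) ^ k * Real.exp (-((k + 1 : ℝ) * (u / 2))) := by
    intro k
    rw [neg_pow, ← Real.exp_nat_mul]
    rw [show (-((k + 1 : ℝ) * (u / 2))) = (k : ℝ) * (-(u / 2)) + (-(u/2)) by ring, Real.exp_add]
    ring
  simp_rw [hterm] at h
  convert h using 1
  · rfl
  rw [show g u = 1 / (1 + Real.exp (u / 2)) from rfl, sub_neg_eq_add, Real.exp_neg]
  have h5 : (1 + (Real.exp (u/2))⁻¹) ≠ 0 := by positivity
  field_simp
  ring


lemma eta_hasSum {m : ℕ} (hm : 1 ≤ m) :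
    HasSum (fun k : ℕ => (-1 : ℝ) ^ k / ((k : ℝ) + 1) ^ (2 * m)) ((1 - 2 / 4 ^ m) * Zc m) := by
  have hZ := hasSum_zeta_nat (k := m) (by omega)
  set Z : ℝ := (-1 : ℝ) ^ (m + 1) * (2:ℝ) ^ (2 * m - 1) * π ^ (2 * m)
      * (bernoulli (2 * m) : ℝ) / (Nat.factorial (2 * m) : ℝ) with hZdef
  have hZc : Zc m = Z := by rw [Zc, hZdef]
  have h1 := (hZ.div_const ((4:ℝ) ^ m)).mul_left 2
  set F : ℕ → ℝ := fun j => if Even j then 2 / (j : ℝ) ^ (2 * m) else 0 with hF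
  have hcomp : (F ∘ fun n : ℕ => 2 * n) = fun n : ℕ => 2 * (1 / (n : ℝ) ^ (2 * m) / 4 ^ m) := by
    funext n
    have he : Even (2 * n) := ⟨n, by ring⟩
    simp only [Function.comp_apply, hF, he, if_true]
    push_cast
    rw [mul_pow, show ((2:ℝ)) ^ (2*m) = 4 ^ m by rw [pow_mul]; norm_num, div_div]
    ring
  have hFsum : HasSum F (2 * (Z / 4 ^ m)) := by
    have hinj : Function.Injective (fun n : ℕ => 2 * n) := by
      intro a b h
      simp only at h
      omega
    have hvanish : ∀ x ∉ Set.range (fun n : ℕ => 2 * n), F x = 0 := by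
      intro x hx
      have hodd : ¬ Even x := by
        rintro ⟨r, hr⟩
        exact hx ⟨r, by simp only; omega⟩
      simp only [hF, hodd, if_false]
    exact (Function.Injective.hasSum_iff hinj hvanish).mp (by rw [hcomp]; exact h1)
  have hdiff := hZ.sub hFsum
  have hptwise : (fun n : ℕ => 1 / (n : ℝ) ^ (2 * m) - F n)
      = fun n : ℕ => (-1 : ℝ) ^ (n + 1) / (n : ℝ) ^ (2 * m) := by
    funext n
    rcases Nat.even_or_odd n with he | ho
    · have hp : (-1:ℝ) ^ (n+1) = -1 := by
        rw [pow_succ, he.neg_one_pow]; ring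
      rw [hp]
      simp only [hF, he, if_true]
      rcases Nat.eq_zero_or_pos n with rfl | hn
      · norm_num [zero_pow (by omega : 2*m ≠ 0)]
      · have hne : ((n:ℝ)) ^ (2*m) ≠ 0 := by
          apply pow_ne_zero
          exact Nat.cast_ne_zero.mpr (by omega)
        field_simp
        norm_num
    · have hno : ¬ Even n := by
        obtain ⟨r, hr⟩ := ho
        rintro ⟨s, hs⟩
        omega
      have hp : (-1:ℝ) ^ (n+1) = 1 := by
        rw [pow_succ, ho.neg_one_pow]; ring
      rw [hp]
      simp only [hF, hno, if_false, sub_zero]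
  rw [hptwise] at hdiff
  have hshift := (hasSum_nat_add_iff'
    (f := fun n : ℕ => (-1:ℝ) ^ (n+1) / (n : ℝ) ^ (2*m)) 1).mpr hdiff
  have hfun2 : (fun n : ℕ => (-1:ℝ) ^ (n+1+1) / ((n+1 : ℕ) : ℝ) ^ (2*m))
      = fun k : ℕ => (-1:ℝ) ^ k / ((k:ℝ) + 1) ^ (2*m) := by
    funext k
    push_cast
    rw [pow_succ, pow_succ]
    ring
  rw [hfun2] at hshift
  convert hshift using 1
  · rfl
  rw [hZc, Finset.sum_range_one]
  norm_num [zero_pow (by omega : 2*m ≠ 0)]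
  ring

lemma summable_aux {p : ℕ} (hp : 2 ≤ p) : Summable (fun k : ℕ => 1 / ((k:ℝ) + 1) ^ p) := by
  have h := (Real.summable_one_div_nat_pow (p := p)).mpr (by omega)
  have h2 := (summable_nat_add_iff 1).mpr h
  apply h2.congr
  intro k
  push_cast
  ring_nf

lemma integral_g_eval {m : ℕ} (hm : 1 ≤ m) :
    ∫ u in Ioi (0:ℝ), u ^ (2*m-1) * g u = (Nat.factorial (2*m-1) : ℝ) * J m / 2 := by
  set N := 2*m-1 with hNdef
  have hN : N + 1 = 2*m := by omega
  set F : ℕ → ℝ → ℝ := fun k u => u ^ N * ((-1:ℝ)^k * Real.exp (-(((k:ℝ)+1) * (u/2)))) with hFdef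
  have hc : ∀ k : ℕ, (0:ℝ) < ((k:ℝ)+1)/2 := by intro k; positivity
  have heqF : ∀ k : ℕ, (fun u : ℝ => (-1:ℝ)^k * (u ^ N * Real.exp (-((((k:ℝ)+1)/2) * u)))) = F k := by
    intro k
    funext u
    rw [hFdef]
    dsimp only
    rw [show ((((k:ℝ)+1)/2) * u) = ((k:ℝ)+1) * (u/2) by ring]
    ring
  have hFint : ∀ k : ℕ, Integrable (F k) (volume.restrict (Ioi 0)) := by
    intro k
    rw [← heqF k]
    exact ((int_pow_exp N (hc k)).const_mul ((-1:ℝ)^k))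
  have hnorm : ∀ k : ℕ, ∫ u in Ioi (0:ℝ), ‖F k u‖
      = (Nat.factorial N : ℝ) / ((((k:ℝ)+1)/2) ^ (N+1)) := by
    intro k
    have heq : ∀ u ∈ Ioi (0:ℝ), ‖F k u‖ = u ^ N * Real.exp (-((((k:ℝ)+1)/2) * u)) := by
      intro u hu
      have hu0 : (0:ℝ) < u := hu
      rw [hFdef]
      dsimp only
      rw [norm_mul, norm_mul, norm_pow, Real.norm_eq_abs, Real.norm_eq_abs, Real.norm_eq_abs,
        abs_of_pos hu0, abs_of_pos (Real.exp_pos _), abs_pow, abs_neg, abs_one, one_pow, one_mul,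
        show (((k:ℝ)+1) * (u/2)) = (((k:ℝ)+1)/2) * u by ring]
    rw [setIntegral_congr_fun measurableSet_Ioi heq, integral_pow_exp N (hc k)]
  have hsummable : Summable (fun k : ℕ => ∫ u in Ioi (0:ℝ), ‖F k u‖) := by
    rw [show (fun k : ℕ => ∫ u in Ioi (0:ℝ), ‖F k u‖)
        = fun k : ℕ => ((Nat.factorial N : ℝ) * 2 ^ (N+1)) * (1/((k:ℝ)+1) ^ (N+1)) from
      funext fun k => by
        rw [hnorm k, div_pow]
        have h1 : ((k:ℝ)+1) ^ (N+1) ≠ 0 := by positivity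
        field_simp]
    exact ((summable_aux (by omega)).mul_left _)
  have hexch := integral_tsum_of_summable_integral_norm hFint hsummable
  have hpt : ∀ u ∈ Ioi (0:ℝ), u ^ N * g u = ∑' k, F k u := by
    intro u hu
    have hu0 : (0:ℝ) < u := hu
    have := ((hasSum_g hu0).mul_left (u ^ N)).tsum_eq
    rw [← this]
  have hIgoal : ∫ u in Ioi (0:ℝ), u ^ N * g u = ∑' k : ℕ, ∫ u in Ioi (0:ℝ), F k u := by
    rw [setIntegral_congr_fun measurableSet_Ioi hpt, hexch]
  have hleft : (fun k : ℕ => ∫ u in Ioi (0:ℝ), F k u)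
      = fun k : ℕ => ((Nat.factorial N : ℝ) * 2 ^ (N+1)) * ((-1:ℝ)^k / ((k:ℝ)+1)^(2*m)) := by
    funext k
    rw [← heqF k, integral_const_mul, integral_pow_exp N (hc k)]
    rw [div_pow]
    have h1 : ((k:ℝ)+1) ^ (N+1) ≠ 0 := by positivity
    rw [hN]
    field_simp
  have hval := ((eta_hasSum hm).mul_left ((Nat.factorial N : ℝ) * 2 ^ (N+1))).tsum_eq
  rw [hIgoal, hleft, hval]
  rw [J, if_neg (by omega : ¬ m = 0)]
  have hP : (4:ℝ)^m = 2^(2*m) := by rw [pow_mul]; norm_num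
  have h2m1 : (2:ℝ)^(2*m+1) = 2 * 2^(2*m) := by rw [pow_succ]; ring
  rw [hN, h2m1, ← hP]
  have hPne : (4:ℝ)^m ≠ 0 := by positivity
  field_simp
  ring


lemma int_gc (k : ℕ) (c a : ℝ) : IntegrableOn (fun u => (u + c) ^ k * g u) (Ioi a) := by
  have := int_g_shift k c 0 a
  simpa using this

lemma int_gsub (k : ℕ) (c a : ℝ) : IntegrableOn (fun u => (u - c) ^ k * g u) (Ioi a) := by
  have := int_gc k (-c) a
  simpa [sub_eq_add_neg] using this

lemma shift (f : ℝ → ℝ) (t a : ℝ) :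
    ∫ x in Ioi a, f (x + t) = ∫ u in Ioi (a + t), f u := by
  have h := (measurePreserving_add_right volume t).setIntegral_preimage_emb
    (measurableEmbedding_addRight t) f (Ioi (a + t))
  rw [show (fun x : ℝ => x + t) ⁻¹' (Ioi (a + t)) = Ioi a from by
    rw [preimage_add_const_Ioi, add_sub_cancel_right]] at h
  exact h

lemma main_nonneg (l : ℕ) {t : ℝ} (ht : 0 ≤ t) :
    ∫ x in Ioi (0:ℝ), x ^ (2*l+1) * K0 x t
      = t^(2*l+2)/(((2*l+1:ℕ):ℝ)+1)
        + ∫ u in Ioi (0:ℝ), ((u+t)^(2*l+1) + (u-t)^(2*l+1)) * g u := by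
  set n := 2*l+1 with hn
  have hodd : Odd n := ⟨l, by omega⟩
  have A1 : IntegrableOn (fun x : ℝ => x ^ n * g (x + t)) (Ioi 0) := by
    have := int_g_shift n 0 t 0
    simpa using this
  have A2 : IntegrableOn (fun x : ℝ => x ^ n * g (x - t)) (Ioi 0) := by
    have := int_g_shift n 0 (-t) 0
    simpa [sub_eq_add_neg] using this
  have hK : ∀ x ∈ Ioi (0:ℝ), x ^ n * K0 x t = x ^ n * g (x + t) + x ^ n * g (x - t) := by
    intro x _
    have : K0 x t = g (x + t) + g (x - t) := rfl
    rw [this]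
    ring
  rw [setIntegral_congr_fun measurableSet_Ioi hK, integral_add A1 A2]
  have s1 : ∫ x in Ioi (0:ℝ), x ^ n * g (x + t) = ∫ u in Ioi t, (u - t)^n * g u := by
    have h := shift (fun u => (u - t)^n * g u) t 0
    rw [zero_add] at h
    rw [← h]
    apply setIntegral_congr_fun measurableSet_Ioi
    intro x _
    dsimp only
    rw [add_sub_cancel_right]
  have s2 : ∫ x in Ioi (0:ℝ), x ^ n * g (x - t) = ∫ u in Ioi (-t), (u + t)^n * g u := by
    have h := shift (fun u => (u + t)^n * g u) (-t) 0
    rw [zero_add] at h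
    rw [← h]
    apply setIntegral_congr_fun measurableSet_Ioi
    intro x _
    dsimp only
    rw [show x + -t + t = x by ring, sub_eq_add_neg]
  rw [s1, s2]
  have hsplit : ∫ u in Ioi (-t), (u + t)^n * g u
      = (∫ u in Ioc (-t) t, (u + t)^n * g u) + ∫ u in Ioi t, (u + t)^n * g u := by
    rw [← setIntegral_union (Set.Ioc_disjoint_Ioi le_rfl) measurableSet_Ioi
      ((int_gc n t (-t)).mono_set Ioc_subset_Ioi_self)
      ((int_gc n t (-t)).mono_set (Ioi_subset_Ioi (by linarith))),
      Set.Ioc_union_Ioi_eq_Ioi (by linarith : -t ≤ t)]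
  have hFc : Continuous fun u : ℝ => (u + t)^n * g u :=
    ((continuous_id.add continuous_const).pow n).mul g_cont
  have hGc : Continuous fun u : ℝ => (u - t)^n * g u :=
    ((continuous_id.sub continuous_const).pow n).mul g_cont
  have hmid : ∫ u in Ioc (-t) t, (u + t)^n * g u
      = t^(n+1)/((n:ℝ)+1) + ∫ u in Ioc 0 t, ((u+t)^n + (u-t)^n) * g u := by
    rw [← intervalIntegral.integral_of_le (by linarith : -t ≤ t),
        ← intervalIntegral.integral_of_le ht,
        ← intervalIntegral.integral_add_adjacent_intervals
          (hFc.intervalIntegrable (-t) 0) (hFc.intervalIntegrable 0 t)]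
    have e1 := intervalIntegral.integral_comp_neg (a := 0) (b := t)
      (fun u => (u + t)^n * g u)
    rw [neg_zero] at e1
    rw [← e1]
    have e2 : ∫ u in (0:ℝ)..t, (-u + t)^n * g (-u)
        = ∫ u in (0:ℝ)..t, ((t-u)^n - (t-u)^n * g u) := by
      apply intervalIntegral.integral_congr
      intro u _
      dsimp only
      rw [g_neg, show -u + t = t - u by ring]
      ring
    have c1 : Continuous fun u : ℝ => (t - u)^n := (continuous_const.sub continuous_id).pow n
    have c2 : Continuous fun u : ℝ => (t - u)^n * g u := c1.mul g_cont
    rw [e2, intervalIntegral.integral_sub (c1.intervalIntegrable 0 t)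
      (c2.intervalIntegrable 0 t)]
    have e3 : ∫ u in (0:ℝ)..t, (t-u)^n = t^(n+1)/((n:ℝ)+1) := by
      have h := intervalIntegral.integral_comp_sub_left (a := 0) (b := t)
        (fun x : ℝ => x ^ n) t
      rw [sub_self, sub_zero] at h
      rw [h, integral_pow, zero_pow (by omega : n+1 ≠ 0), sub_zero]
    have e4 : ∫ u in (0:ℝ)..t, (t-u)^n * g u = - ∫ u in (0:ℝ)..t, (u-t)^n * g u := by
      rw [← intervalIntegral.integral_neg]
      apply intervalIntegral.integral_congr
      intro u _
      dsimp only
      rw [show t - u = -(u - t) by ring, hodd.neg_pow]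
      ring
    rw [e3, e4]
    have e5 : ∫ u in (0:ℝ)..t, ((u+t)^n + (u-t)^n) * g u
        = (∫ u in (0:ℝ)..t, (u-t)^n * g u) + ∫ u in (0:ℝ)..t, (u+t)^n * g u := by
      rw [← intervalIntegral.integral_add (hGc.intervalIntegrable 0 t)
        (hFc.intervalIntegrable 0 t)]
      apply intervalIntegral.integral_congr
      intro u _
      dsimp only
      ring
    rw [e5]
    ring
  rw [hsplit, hmid]
  have hIoiT : (∫ u in Ioi t, (u - t)^n * g u) + ∫ u in Ioi t, (u + t)^n * g u
      = ∫ u in Ioi t, ((u+t)^n + (u-t)^n) * g u := by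
    rw [← integral_add ((int_gsub n t t)) ((int_gc n t t))]
    apply setIntegral_congr_fun measurableSet_Ioi
    intro u _
    ring
  have hunion : (∫ u in Ioc (0:ℝ) t, ((u+t)^n + (u-t)^n) * g u)
      + (∫ u in Ioi t, ((u+t)^n + (u-t)^n) * g u)
      = ∫ u in Ioi (0:ℝ), ((u+t)^n + (u-t)^n) * g u := by
    have hi : IntegrableOn (fun u : ℝ => ((u+t)^n + (u-t)^n) * g u) (Ioi 0) := by
      have h1 := (int_gc n t 0).add (int_gsub n t 0)
      have h2 : ((fun u : ℝ => (u + t)^n * g u) + fun u : ℝ => (u - t)^n * g u)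
          = fun u : ℝ => ((u+t)^n + (u-t)^n) * g u := by
        funext u
        simp only [Pi.add_apply]
        ring
      rw [← h2]
      exact h1
    rw [← setIntegral_union (Set.Ioc_disjoint_Ioi le_rfl) measurableSet_Ioi
      (hi.mono_set Ioc_subset_Ioi_self) (hi.mono_set (Ioi_subset_Ioi ht)),
      Set.Ioc_union_Ioi_eq_Ioi ht]
  rw [← hunion]
  rw [← hIoiT, hn]
  push_cast
  ring

lemma binom_int (n : ℕ) (t : ℝ) :
    ∫ u in Ioi (0:ℝ), ((u+t)^n + (u-t)^n) * g u
      = ∑ j ∈ range (n+1), (t^j + (-t)^j) * (n.choose j : ℝ)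
          * ∫ u in Ioi (0:ℝ), u^(n-j) * g u := by
  have hpt : ∀ u : ℝ, ((u+t)^n + (u-t)^n) * g u
      = ∑ j ∈ range (n+1), (t^j + (-t)^j) * (n.choose j : ℝ) * (u^(n-j) * g u) := by
    intro u
    rw [show u + t = t + u by ring, show u - t = -t + u by ring, add_pow, add_pow,
      ← Finset.sum_add_distrib, Finset.sum_mul]
    apply Finset.sum_congr rfl
    intro j hj
    ring
  rw [setIntegral_congr_fun measurableSet_Ioi (fun u (_ : u ∈ Ioi (0:ℝ)) => hpt u)]
  rw [integral_finset_sum _ (fun j hj => ((int_g (n-j) 0).const_mul _))]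
  apply Finset.sum_congr rfl
  intro j hj
  rw [integral_const_mul]

lemma assemble (l : ℕ) {s : ℝ} (hs : 0 ≤ s) :
    (∫ x in Ioi (0:ℝ), x ^ (2*l+1) / (Nat.factorial (2*l+1) : ℝ) * K0 x s)
      = ∑ m ∈ Finset.range (l+2),
          J m * s^(2*(l+1)-2*m) / (Nat.factorial (2*(l+1)-2*m) : ℝ) := by
  set n := 2*l+1 with hn
  have hfne : ((n.factorial : ℝ)) ≠ 0 := fact_ne n
  have hp1 : ∀ x : ℝ, x^n / (n.factorial : ℝ) * K0 x s
      = (n.factorial : ℝ)⁻¹ * (x^n * K0 x s) := by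
    intro x
    ring
  simp_rw [hp1]
  rw [integral_const_mul, main_nonneg l hs, binom_int n s]
  have hvanish : ∀ j, Odd j → (s^j + (-s)^j) * (n.choose j : ℝ)
      * ∫ u in Ioi (0:ℝ), u^(n-j) * g u = 0 := by
    intro j hj
    rw [hj.neg_pow]
    ring
  rw [show n+1 = 2*(l+1) from by omega, sum_range_two_mul _ hvanish (l+1)]
  have hterm : ∀ k ∈ range (l+1),
      (s^(2*k) + (-s)^(2*k)) * (n.choose (2*k) : ℝ) * ∫ u in Ioi (0:ℝ), u^(n-2*k) * g u
      = (n.factorial : ℝ) * (J (l+1-k) * s^(2*k) / ((2*k).factorial : ℝ)) := by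
    intro k hk
    have hk' : k ≤ l := by simpa [Nat.lt_succ_iff] using hk
    have he : Even (2*k) := ⟨k, by ring⟩
    rw [he.neg_pow]
    rw [show n - 2*k = 2*(l+1-k)-1 from by omega]
    rw [integral_g_eval (by omega : 1 ≤ l+1-k)]
    have hch := Nat.choose_mul_factorial_mul_factorial (show 2*k ≤ n from by omega)
    have hch' : ((n.choose (2*k)) : ℝ) * ((2*k).factorial : ℝ) * ((n - 2*k).factorial : ℝ)
        = (n.factorial : ℝ) := by
      exact_mod_cast congrArg (Nat.cast : ℕ → ℝ) hch
    rw [show n - 2*k = 2*(l+1-k)-1 from by omega] at hch'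
    have h2k : ((2*k).factorial : ℝ) ≠ 0 := fact_ne _
    have hmm : ((2*(l+1-k)-1).factorial : ℝ) ≠ 0 := fact_ne _
    field_simp
    linear_combination (2 * s^(2*k) * J (l+1-k)) * hch'
  rw [Finset.sum_congr rfl hterm, ← Finset.mul_sum]
  have E1 : (n.factorial : ℝ)⁻¹ * (s^(2*(l+1))/(((2*l+1 : ℕ):ℝ)+1))
      = J 0 * s^(2*(l+1)-2*0) / ((2*(l+1)-2*0).factorial : ℝ) := by
    rw [J_zero, one_mul, show 2*(l+1)-2*0 = n+1 from by omega]
    rw [show ((n+1).factorial : ℝ) = ((n:ℝ)+1) * (n.factorial : ℝ) from by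
      rw [Nat.factorial_succ]; push_cast; ring]
    rw [show 2*(l+1) = n+1 from by omega]
    have hne : ((n:ℝ)+1) ≠ 0 := by positivity
    field_simp
    rw [hn]
  have E2 : (n.factorial : ℝ)⁻¹ * ((n.factorial : ℝ)
        * ∑ k ∈ range (l+1), J (l+1-k) * s^(2*k) / ((2*k).factorial : ℝ))
      = ∑ m ∈ range (l+1),
          J (m+1) * s^(2*(l+1)-2*(m+1)) / ((2*(l+1)-2*(m+1)).factorial : ℝ) := by
    rw [← mul_assoc, inv_mul_cancel₀ hfne, one_mul]
    rw [← Finset.sum_range_reflect]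
    apply Finset.sum_congr rfl
    intro k hk
    have hk' : k ≤ l := by simpa [Nat.lt_succ_iff] using hk
    rw [show l+1-(l+1-1-k) = k+1 from by omega,
      show 2*(l+1-1-k) = 2*(l+1)-2*(k+1) from by omega]
  rw [mul_add, E1, E2]
  conv_rhs => rw [Finset.sum_range_succ']
  exact add_comm _ _


end Stmt2Aux

theorem stmt2 (β : ℕ → ℝ) (hβ0 : β 0 = 1)
    (hβ : ∀ p : ℕ, 1 ≤ p →
      ∑ m ∈ Finset.range (p + 1),
        ((-2 * π ^ 2) ^ m /
            ((Nat.factorial m : ℝ) * (Nat.doubleFactorial (2 * m + 1) : ℝ))) * β (p - m) = 0)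
    (i : ℕ) (hi : 1 ≤ i) (t : ℝ) :
    (∫ x in Set.Ioi (0:ℝ), x ^ (2 * i - 1) / (Nat.factorial (2 * i - 1) : ℝ) * K0 x t) =
      ∑ m ∈ Finset.range (i + 1),
        β m * t ^ (2 * i - 2 * m) / (Nat.factorial (2 * i - 2 * m) : ℝ) := by
  have hβJ := Stmt2Aux.beta_eq_J β hβ0 hβ
  obtain ⟨l, rfl⟩ : ∃ l, i = l + 1 := ⟨i - 1, by omega⟩
  have key : ∀ s : ℝ, 0 ≤ s →
      (∫ x in Set.Ioi (0:ℝ), x ^ (2 * (l+1) - 1) / (Nat.factorial (2 * (l+1) - 1) : ℝ) * K0 x s)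
        = ∑ m ∈ Finset.range ((l+1) + 1),
            β m * s ^ (2 * (l+1) - 2 * m) / (Nat.factorial (2 * (l+1) - 2 * m) : ℝ) := by
    intro s hs
    rw [show 2 * (l+1) - 1 = 2*l+1 from by omega, show (l+1)+1 = l+2 from by omega,
      Stmt2Aux.assemble l hs]
    apply Finset.sum_congr rfl
    intro m hm
    rw [hβJ m]
  rcases le_or_gt 0 t with ht | ht
  · exact key t ht
  · have h2 := key (-t) (by linarith)
    have hL : ∀ x : ℝ, K0 x (-t) = K0 x t := by
      intro x
      simp only [K0, show ∀ x : ℝ, x + -t = x - t from fun x => by ring,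
        show ∀ x : ℝ, x - -t = x + t from fun x => by ring]
      ring
    simp_rw [hL] at h2
    rw [h2]
    apply Finset.sum_congr rfl
    intro m hm
    have hmle : m ≤ l + 1 := by simpa [Nat.lt_succ_iff] using hm
    have he : Even (2 * (l+1) - 2 * m) := ⟨(l+1) - m, by omega⟩
    rw [he.neg_pow]
end

section
/- Let R ≥ 0 and let z₁, z₂ be real numbers with z₁, z₂ > √(2R) and z₁ ≠ z₂. Set x₁ = √(z₁² − 2R) and x₂ = √(z₂² − 2R). Then ∫₀^R z₁·z₂·(z₁² − 2r)^{−3/2}·(z₂² − 2r)^{−3/2} dr = (z₁ z₂)/(x₁ x₂ (x₁ − x₂)²) − 1/(z₁ − z₂)². -/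
open Real MeasureTheory

lemma stmt7_rpow_aux (x : ℝ) (hx : 0 < x) :
    x ^ (-(3:ℝ) / 2) = (Real.sqrt x ^ 3)⁻¹ := by
  rw [Real.sqrt_eq_rpow, ← Real.rpow_natCast (x ^ ((1:ℝ)/2)) 3,
    ← Real.rpow_mul hx.le, ← Real.rpow_neg hx.le]
  norm_num

lemma stmt7_sqrt_deriv (c : ℝ) (r : ℝ) (h : 0 < c - 2 * r) :
    HasDerivAt (fun x : ℝ => Real.sqrt (c - 2 * x))
      (-(Real.sqrt (c - 2 * r))⁻¹) r := by
  have hin : HasDerivAt (fun x : ℝ => c - 2 * x) (-2) r := by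
    simpa using ((hasDerivAt_id r).const_mul 2).const_sub c
  have hD := (Real.hasDerivAt_sqrt h.ne').comp r hin
  have hs : Real.sqrt (c - 2 * r) ≠ 0 := (Real.sqrt_ne_zero'.2 h)
  refine hD.congr_deriv ?_
  field_simp

theorem stmt7 (R z₁ z₂ : ℝ) (hR : 0 ≤ R)
    (h1 : Real.sqrt (2 * R) < z₁) (h2 : Real.sqrt (2 * R) < z₂) (hne : z₁ ≠ z₂) :
    (∫ r in (0:ℝ)..R,
        z₁ * z₂ * (z₁ ^ 2 - 2 * r) ^ (-(3:ℝ) / 2) * (z₂ ^ 2 - 2 * r) ^ (-(3:ℝ) / 2)) =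
      z₁ * z₂ / (Real.sqrt (z₁ ^ 2 - 2 * R) * Real.sqrt (z₂ ^ 2 - 2 * R) *
          (Real.sqrt (z₁ ^ 2 - 2 * R) - Real.sqrt (z₂ ^ 2 - 2 * R)) ^ 2) -
        1 / (z₁ - z₂) ^ 2 := by
  have hz1 : 0 < z₁ := lt_of_le_of_lt (Real.sqrt_nonneg _) h1
  have hz2 : 0 < z₂ := lt_of_le_of_lt (Real.sqrt_nonneg _) h2
  have h2R : 0 ≤ 2 * R := by linarith
  have hsq : Real.sqrt (2 * R) ^ 2 = 2 * R := Real.sq_sqrt h2R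
  have hq1 : 2 * R < z₁ ^ 2 := by nlinarith [Real.sqrt_nonneg (2 * R)]
  have hq2 : 2 * R < z₂ ^ 2 := by nlinarith [Real.sqrt_nonneg (2 * R)]
  have hzz : z₁ ^ 2 ≠ z₂ ^ 2 := by
    intro h
    have : (z₁ - z₂) * (z₁ + z₂) = 0 := by ring_nf; nlinarith
    rcases mul_eq_zero.1 this with h' | h'
    · exact hne (by linarith)
    · linarith
  set F : ℝ → ℝ := fun r =>
    z₁ * z₂ * (Real.sqrt (z₁ ^ 2 - 2 * r) * Real.sqrt (z₂ ^ 2 - 2 * r) *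
      (Real.sqrt (z₁ ^ 2 - 2 * r) - Real.sqrt (z₂ ^ 2 - 2 * r)) ^ 2)⁻¹ with hF
  have key : ∀ r ∈ Set.uIcc (0:ℝ) R, HasDerivAt F
      (z₁ * z₂ * (z₁ ^ 2 - 2 * r) ^ (-(3:ℝ) / 2) * (z₂ ^ 2 - 2 * r) ^ (-(3:ℝ) / 2)) r := by
    intro r hr
    rw [Set.uIcc_of_le hR] at hr
    obtain ⟨hr0, hrR⟩ := hr
    have hu : 0 < z₁ ^ 2 - 2 * r := by linarith
    have hv : 0 < z₂ ^ 2 - 2 * r := by linarith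
    set s := Real.sqrt (z₁ ^ 2 - 2 * r) with hsdef
    set t := Real.sqrt (z₂ ^ 2 - 2 * r) with htdef
    have hs0 : 0 < s := Real.sqrt_pos.2 hu
    have ht0 : 0 < t := Real.sqrt_pos.2 hv
    have hs2 : s ^ 2 = z₁ ^ 2 - 2 * r := Real.sq_sqrt hu.le
    have ht2 : t ^ 2 = z₂ ^ 2 - 2 * r := Real.sq_sqrt hv.le
    have hst : s ≠ t := by
      intro h
      exact hzz (by nlinarith)
    have hds := stmt7_sqrt_deriv (z₁ ^ 2) r hu
    have hdt := stmt7_sqrt_deriv (z₂ ^ 2) r hv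
    have hD : HasDerivAt (fun x => Real.sqrt (z₁ ^ 2 - 2 * x) * Real.sqrt (z₂ ^ 2 - 2 * x) *
        (Real.sqrt (z₁ ^ 2 - 2 * x) - Real.sqrt (z₂ ^ 2 - 2 * x)) ^ 2)
        (((-s⁻¹) * t + s * (-t⁻¹)) * (s - t) ^ 2 +
          s * t * (2 * (s - t) ^ 1 * ((-s⁻¹) - (-t⁻¹)))) r :=
      (hds.mul hdt).mul ((hds.sub hdt).pow 2)
    have hDne : s * t * (s - t) ^ 2 ≠ 0 := by
      apply mul_ne_zero (mul_ne_zero hs0.ne' ht0.ne')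
      exact pow_ne_zero 2 (sub_ne_zero.2 hst)
    have := (hD.inv hDne).const_mul (z₁ * z₂)
    refine this.congr_deriv ?_
    rw [stmt7_rpow_aux _ hu, stmt7_rpow_aux _ hv, ← hsdef, ← htdef]
    have hsub : s - t ≠ 0 := sub_ne_zero.2 hst
    field_simp
    ring
  have hcont : IntervalIntegrable (fun r =>
      z₁ * z₂ * (z₁ ^ 2 - 2 * r) ^ (-(3:ℝ) / 2) * (z₂ ^ 2 - 2 * r) ^ (-(3:ℝ) / 2))
      MeasureTheory.volume 0 R := by
    apply ContinuousOn.intervalIntegrable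
    rw [Set.uIcc_of_le hR]
    have c1 : ContinuousOn (fun r : ℝ => z₁ ^ 2 - 2 * r) (Set.Icc 0 R) := by fun_prop
    have c2 : ContinuousOn (fun r : ℝ => z₂ ^ 2 - 2 * r) (Set.Icc 0 R) := by fun_prop
    apply ContinuousOn.mul
    · apply ContinuousOn.mul continuousOn_const
      exact c1.rpow_const (fun x hx => Or.inl (by have := hx.2; intro h; nlinarith))
    · exact c2.rpow_const (fun x hx => Or.inl (by have := hx.2; intro h; nlinarith))
  have hInt := intervalIntegral.integral_eq_sub_of_hasDerivAt key hcont
  rw [hInt, hF]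
  have hF0 : Real.sqrt (z₁ ^ 2 - 2 * 0) = z₁ := by
    rw [show z₁ ^ 2 - 2 * 0 = z₁ ^ 2 by ring, Real.sqrt_sq hz1.le]
  have hF0' : Real.sqrt (z₂ ^ 2 - 2 * 0) = z₂ := by
    rw [show z₂ ^ 2 - 2 * 0 = z₂ ^ 2 by ring, Real.sqrt_sq hz2.le]
  simp only [hF0, hF0']
  have hnz : z₁ * z₂ * (z₁ - z₂) ^ 2 ≠ 0 := by
    apply mul_ne_zero (mul_ne_zero hz1.ne' hz2.ne')
    exact pow_ne_zero 2 (sub_ne_zero.2 hne)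
  rw [div_eq_mul_inv]
  congr 1
  rw [eq_div_iff (pow_ne_zero 2 (sub_ne_zero.2 hne))]
  field_simp
end
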